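/- arXiv:0909.5329 — 3 statements merged into one kernel-verified Lean document; each statement's English description precedes it below -/
import Mathlib

section
/- Every monomial ordering on the monomials of K[x_1,...,x_n] (a total ordering compatible with multiplication) can be represented as the ordering >_M induced by some invertible real n×n matrix M, where x^α >_M x^β iff Mα is lexicographically greater than Mβ in ℝ^n. -/
/-- A monomial ordering on the monomials `x^α`, `α ∈ ℕ^n`: a (strict) total ordering
compatible with multiplication of monomials (addition of exponent vectors). -/
structure MonOrd (n : ℕ) where
  lt : (Fin n →₀ ℕ) → (Fin n →₀ ℕ) → Prop
  irrefl : ∀ a, ¬ lt a a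
  trans : ∀ a b c, lt a b → lt b c → lt a c
  total : ∀ a b : Fin n →₀ ℕ, a ≠ b → lt a b ∨ lt b a
  add_compat : ∀ a b c, lt a b → lt (c + a) (c + b)

namespace MonOrdProof

variable {n : ℕ}

/-- functions to finsupps -/
noncomputable def FN (a : Fin n → ℕ) : Fin n →₀ ℕ := Finsupp.equivFunOnFinite.symm a

@[simp] lemma FN_apply (a : Fin n → ℕ) (i : Fin n) : FN a i = a i := rfl

lemma _root_.MonOrd.asymm (o : MonOrd n) {a b} (h : o.lt a b) : ¬ o.lt b a :=
  fun h' => o.irrefl a (o.trans _ _ _ h h')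

lemma _root_.MonOrd.cancel (o : MonOrd n) {a b c} (h : o.lt (c + a) (c + b)) : o.lt a b := by
  rcases eq_or_ne a b with rfl | hne
  · exact absurd h (o.irrefl _)
  · rcases o.total a b hne with h1 | h1
    · exact h1
    · exact absurd (o.add_compat _ _ c h1) (o.asymm h)

lemma _root_.MonOrd.add_compat' (o : MonOrd n) {a b} (c) (h : o.lt a b) : o.lt (a + c) (b + c) := by
  rw [add_comm a c, add_comm b c]; exact o.add_compat _ _ _ h

lemma _root_.MonOrd.nsmul_lt (o : MonOrd n) {a b} (h : o.lt a b) :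
    ∀ k : ℕ, 0 < k → o.lt (k • a) (k • b) := by
  intro k hk
  induction k with
  | zero => exact absurd hk (lt_irrefl 0)
  | succ k ih =>
    rcases Nat.eq_zero_or_pos k with rfl | hk'
    · simpa using h
    · rw [succ_nsmul, succ_nsmul]
      exact o.trans _ _ _ (o.add_compat _ _ _ h)
        (o.add_compat' b (ih hk'))

lemma _root_.MonOrd.nsmul_cancel (o : MonOrd n) {a b} {k : ℕ} (hk : 0 < k)
    (h : o.lt (k • a) (k • b)) : o.lt a b := by
  rcases eq_or_ne a b with rfl | hne
  · exact absurd h (o.irrefl _)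
  · rcases o.total a b hne with h1 | h1
    · exact h1
    · exact absurd (o.nsmul_lt h1 k hk) (o.asymm h)

/-- the positive cone on `ℚ^n` induced by a monomial order -/
def PosQ (o : MonOrd n) (v : Fin n → ℚ) : Prop :=
  ∃ (N : ℕ) (a b : Fin n → ℕ), 0 < N ∧ (∀ i, (N : ℚ) * v i = (a i : ℚ) - (b i : ℚ)) ∧
    o.lt (FN b) (FN a)

lemma FN_eq_iff {a b : Fin n → ℕ} : FN a = FN b ↔ ∀ i, a i = b i := by
  constructor
  · intro h i; have := congrArg (fun f => f i) h; simpa using this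
  · intro h; ext i; simpa using h i

lemma posQ_total (o : MonOrd n) {v : Fin n → ℚ} (hv : v ≠ 0) : PosQ o v ∨ PosQ o (-v) := by
  set N : ℕ := ∏ i, (v i).den with hN
  have hNpos : 0 < N := Finset.prod_pos (fun i _ => (v i).pos)
  have key : ∀ i, ∃ z : ℤ, (N : ℚ) * v i = (z : ℚ) := by
    intro i
    obtain ⟨c, hc⟩ := Finset.dvd_prod_of_mem (fun i => (v i).den) (Finset.mem_univ i)
    refine ⟨c * (v i).num, ?_⟩
    rw [hN, hc]
    push_cast
    rw [mul_comm ((v i).den : ℚ) (c : ℚ), mul_assoc, mul_comm ((v i).den : ℚ) (v i),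
      Rat.mul_den_eq_num]
  choose z hz using key
  set a : Fin n → ℕ := fun i => (z i).toNat with ha
  set b : Fin n → ℕ := fun i => (-(z i)).toNat with hb
  have heq : ∀ i, (N : ℚ) * v i = (a i : ℚ) - (b i : ℚ) := by
    intro i
    rw [hz i, ha, hb]
    have := Int.toNat_sub_toNat_neg (z i)
    exact_mod_cast congrArg (fun t : ℤ => (t : ℚ)) this.symm
  have hne : FN a ≠ FN b := by
    intro h
    apply hv
    funext i
    have hi := FN_eq_iff.mp h i
    have : (N : ℚ) * v i = 0 := by rw [heq i, hi]; ring
    have hN0 : (N : ℚ) ≠ 0 := by exact_mod_cast hNpos.ne'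
    simpa [hN0] using this
  rcases o.total _ _ hne with h1 | h1
  · right
    exact ⟨N, b, a, hNpos, fun i => by simp [Pi.neg_apply]; linarith [heq i], h1⟩
  · left
    exact ⟨N, a, b, hNpos, heq, h1⟩

lemma posQ_add (o : MonOrd n) {v w : Fin n → ℚ} (hv : PosQ o v) (hw : PosQ o w) :
    PosQ o (v + w) := by
  obtain ⟨N, a, b, hN, hab, hlt⟩ := hv
  obtain ⟨M, c, d, hM, hcd, hlt'⟩ := hw
  refine ⟨N * M, fun i => M * a i + N * c i, fun i => M * b i + N * d i,
    Nat.mul_pos hN hM, ?_, ?_⟩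
  · intro i
    have h1 := hab i
    have h2 := hcd i
    push_cast
    have : ((N : ℚ) * M) * (v + w) i = (M : ℚ) * ((N : ℚ) * v i) + (N : ℚ) * ((M : ℚ) * w i) := by
      simp [Pi.add_apply]; ring
    rw [this, h1, h2]; ring
  · have e1 : FN (fun i => M * b i + N * d i) = M • FN b + N • FN d := by
      ext i; simp [FN, mul_comm]
    have e2 : FN (fun i => M * a i + N * c i) = M • FN a + N • FN c := by
      ext i; simp [FN, mul_comm]
    rw [e1, e2]
    have s1 : o.lt (M • FN b) (M • FN a) := o.nsmul_lt hlt M hM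
    have s2 : o.lt (N • FN d) (N • FN c) := o.nsmul_lt hlt' N hN
    exact o.trans _ _ _ (o.add_compat' _ s1) (o.add_compat _ _ _ s2)

lemma not_posQ_neg (o : MonOrd n) {v : Fin n → ℚ} (hv : PosQ o v) (hv' : PosQ o (-v)) :
    False := by
  have := posQ_add o hv hv'
  rw [add_neg_cancel] at this
  obtain ⟨N, a, b, hN, hab, hlt⟩ := this
  have : FN a = FN b := by
    apply FN_eq_iff.mpr
    intro i
    have h := hab i
    simp only [Pi.zero_apply, mul_zero] at h
    have : (a i : ℚ) = (b i : ℚ) := by linarith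
    exact_mod_cast this
  rw [this] at hlt
  exact o.irrefl _ hlt

lemma posQ_zero (o : MonOrd n) : ¬ PosQ o (0 : Fin n → ℚ) := by
  intro h
  exact not_posQ_neg o h (by simpa using h)

lemma posQ_smul (o : MonOrd n) {v : Fin n → ℚ} {q : ℚ} (hq : 0 < q) (hv : PosQ o v) :
    PosQ o (q • v) := by
  obtain ⟨N, a, b, hN, hab, hlt⟩ := hv
  set p : ℕ := q.num.toNat with hp
  have hnum : (0:ℤ) < q.num := Rat.num_pos.mpr hq
  have hppos : 0 < p := by rw [hp]; omega
  have hpz : (p : ℤ) = q.num := by rw [hp]; omega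
  have hpq : (p : ℚ) = q * q.den := by
    rw [Rat.mul_den_eq_num]
    exact_mod_cast congrArg (fun t : ℤ => (t : ℚ)) hpz
  refine ⟨N * q.den, fun i => p * a i, fun i => p * b i, Nat.mul_pos hN q.pos, ?_, ?_⟩
  · intro i
    have h1 := hab i
    have hd : (q.den : ℚ) * q = (p : ℚ) := by rw [hpq]; ring
    simp only [Pi.smul_apply, smul_eq_mul]
    push_cast
    linear_combination (p : ℚ) * h1 + ((N : ℚ) * v i) * hd
  · have e1 : FN (fun i => p * b i) = p • FN b := by ext i; simp [FN, mul_comm]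
    have e2 : FN (fun i => p * a i) = p • FN a := by ext i; simp [FN, mul_comm]
    rw [e1, e2]
    exact o.nsmul_lt hlt p hppos

lemma lt_iff_posQ (o : MonOrd n) (a b : Fin n →₀ ℕ) :
    o.lt a b ↔ PosQ o (fun i => (b i : ℚ) - (a i : ℚ)) := by
  constructor
  · intro h
    refine ⟨1, fun i => b i, fun i => a i, one_pos, fun i => by push_cast; ring, ?_⟩
    have e1 : FN (fun i => (a i : ℕ)) = a := Finsupp.equivFunOnFinite_symm_coe a
    have e2 : FN (fun i => (b i : ℕ)) = b := Finsupp.equivFunOnFinite_symm_coe b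
    rw [e1, e2]; exact h
  · rintro ⟨N, c, d, hN, hcd, hlt⟩
    have key : N • a + FN c = N • b + FN d := by
      ext i
      have h2 : (N : ℚ) * ((b i : ℚ) - (a i : ℚ)) = (c i : ℚ) - (d i : ℚ) := hcd i
      have h3 : (N : ℚ) * (a i : ℚ) + (c i : ℚ) = (N : ℚ) * (b i : ℚ) + (d i : ℚ) := by
        ring_nf
        ring_nf at h2
        linarith
      simp only [Finsupp.add_apply, Finsupp.smul_apply, smul_eq_mul, FN_apply]
      exact_mod_cast h3
    have h1 : o.lt (N • a + FN d) (N • a + FN c) := o.add_compat _ _ _ hlt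
    rw [key] at h1
    rw [add_comm (N • a) (FN d), add_comm (N • b) (FN d)] at h1
    exact o.nsmul_cancel hN (o.cancel h1)

lemma posQ_sum (o : MonOrd n) {ι : Type*} (s : Finset ι) (hs : s.Nonempty) (f : ι → Fin n → ℚ)
    (h : ∀ i ∈ s, PosQ o (f i)) : PosQ o (∑ i ∈ s, f i) := by
  induction hs using Finset.Nonempty.cons_induction with
  | singleton i => simpa using h i (Finset.mem_singleton_self i)
  | cons i s his hs ih =>
    rw [Finset.sum_cons]
    exact posQ_add o (h i (Finset.mem_cons_self i s))
      (ih (fun j hj => h j (Finset.mem_cons_of_mem hj)))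



/-! ### Part 2: the Hölder-type functional -/

def Nn (o : MonOrd n) (w : Fin n → ℚ) : Prop := PosQ o w ∨ w = 0

lemma nn_add (o : MonOrd n) {v w} (hv : Nn o v) (hw : Nn o w) : Nn o (v + w) := by
  rcases hv with hv | rfl
  · rcases hw with hw | rfl
    · exact Or.inl (posQ_add o hv hw)
    · rw [add_zero]; exact Or.inl hv
  · simpa using hw

lemma nn_posQ_add (o : MonOrd n) {v w} (hv : Nn o v) (hw : PosQ o w) : PosQ o (v + w) := by
  rcases hv with hv | rfl
  · exact posQ_add o hv hw
  · simpa using hw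

lemma not_posQ_of_nn (o : MonOrd n) {v} (hv : Nn o v) : ¬ PosQ o (-v) := by
  intro h
  rcases hv with hv | rfl
  · exact not_posQ_neg o hv h
  · rw [neg_zero] at h; exact posQ_zero o h

lemma nn_smul (o : MonOrd n) {q : ℚ} (hq : 0 ≤ q) {e} (he : PosQ o e) : Nn o (q • e) := by
  rcases lt_or_eq_of_le hq with hq | rfl
  · exact Or.inl (posQ_smul o hq he)
  · simp [Nn]

def SS (o : MonOrd n) (e v : Fin n → ℚ) : Set ℝ :=
  {x | ∃ q : ℚ, (q : ℝ) = x ∧ Nn o (v - q • e)}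

noncomputable def fH (o : MonOrd n) (e v : Fin n → ℚ) : ℝ := sSup (SS o e v)

section Hoelder

variable (o : MonOrd n) (W : Submodule ℚ (Fin n → ℚ)) (e : Fin n → ℚ)
variable (he : PosQ o e) (hdom : ∀ w ∈ W, ∃ Q : ℚ, PosQ o (Q • e - w))

include he in
lemma mem_SS_lt {v : Fin n → ℚ} {x : ℝ} (hx : x ∈ SS o e v) {Q : ℚ}
    (hQ : PosQ o (Q • e - v)) : x < (Q : ℝ) := by
  obtain ⟨q, rfl, hq⟩ := hx
  have hlt : q < Q := by
    by_contra hle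
    push_neg at hle
    have h1 : Nn o ((q - Q) • e) := nn_smul o (by linarith) he
    have h2 : Nn o (v - Q • e) := by
      have : v - Q • e = (v - q • e) + (q - Q) • e := by rw [sub_smul]; abel
      rw [this]
      exact nn_add o hq h1
    exact not_posQ_of_nn o h2 (by simpa using hQ)
  exact_mod_cast hlt

include he hdom in
lemma SS_bdd {v : Fin n → ℚ} (hv : v ∈ W) : BddAbove (SS o e v) := by
  obtain ⟨Q, hQ⟩ := hdom v hv
  exact ⟨Q, fun x hx => (mem_SS_lt o e he hx hQ).le⟩

omit he in
include hdom in
lemma SS_ne {v : Fin n → ℚ} (hv : v ∈ W) : (SS o e v).Nonempty := by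
  obtain ⟨Q, hQ⟩ := hdom (-v) (neg_mem hv)
  refine ⟨((-Q : ℚ) : ℝ), -Q, rfl, Or.inl ?_⟩
  have : v - (-Q : ℚ) • e = Q • e - -v := by rw [neg_smul]; abel
  rw [this]; exact hQ

include he hdom in
lemma le_fH {v : Fin n → ℚ} (hv : v ∈ W) {q : ℚ} (hq : Nn o (v - q • e)) :
    (q : ℝ) ≤ fH o e v :=
  le_csSup (SS_bdd o W e he hdom hv) ⟨q, rfl, hq⟩

include he hdom in
lemma rat_lt_fH {v : Fin n → ℚ} (hv : v ∈ W) {q : ℚ} (hq : (q : ℝ) < fH o e v) :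
    PosQ o (v - q • e) := by
  obtain ⟨x, hx, hqx⟩ := exists_lt_of_lt_csSup (SS_ne o W e hdom hv) hq
  obtain ⟨r, rfl, hr⟩ := hx
  have hqr : q < r := by exact_mod_cast hqx
  have h1 : PosQ o ((r - q) • e) := posQ_smul o (by linarith) he
  have : v - q • e = (v - r • e) + (r - q) • e := by rw [sub_smul]; abel
  rw [this]
  exact nn_posQ_add o hr h1

include he hdom in
lemma fH_lt_rat {v : Fin n → ℚ} (hv : v ∈ W) {q : ℚ} (hq : fH o e v < q) :
    PosQ o (q • e - v) := by
  have hnm : ¬ ((q : ℝ) ∈ SS o e v) := fun h =>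
    absurd (le_csSup (SS_bdd o W e he hdom hv) h) (not_le.mpr hq)
  have hnn : ¬ Nn o (v - q • e) := fun h => hnm ⟨q, rfl, h⟩
  have hne : v - q • e ≠ 0 := fun h => hnn (Or.inr h)
  rcases posQ_total o hne with h | h
  · exact absurd (Or.inl h) hnn
  · simpa using h

include he hdom in
lemma fH_add {u v : Fin n → ℚ} (hu : u ∈ W) (hv : v ∈ W) :
    fH o e (u + v) = fH o e u + fH o e v := by
  have hSSadd : ∀ q r : ℚ, Nn o (u - q • e) → Nn o (v - r • e) →
      Nn o ((u + v) - (q + r) • e) := by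
    intro q r h1 h2
    have : (u + v) - (q + r) • e = (u - q • e) + (v - r • e) := by rw [add_smul]; abel
    rw [this]; exact nn_add o h1 h2
  have hle : fH o e u + fH o e v ≤ fH o e (u + v) := by
    have h1 : fH o e u ≤ fH o e (u + v) - fH o e v := by
      apply csSup_le (SS_ne o W e hdom hu)
      rintro x ⟨q, rfl, hq⟩
      rw [le_sub_comm]
      apply csSup_le (SS_ne o W e hdom hv)
      rintro y ⟨r, rfl, hr⟩
      rw [le_sub_iff_add_le]
      have h2 := le_fH o W e he hdom (add_mem hu hv) (hSSadd q r hq hr)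
      push_cast at h2
      linarith
    linarith
  have hge : fH o e (u + v) ≤ fH o e u + fH o e v := by
    by_contra hlt
    push_neg at hlt
    set d : ℝ := fH o e (u + v) - fH o e u - fH o e v with hd
    have hdpos : 0 < d := by rw [hd]; linarith
    obtain ⟨q, hq1, hq2⟩ := exists_rat_btwn (show fH o e u < fH o e u + d / 2 by linarith)
    obtain ⟨r, hr1, hr2⟩ := exists_rat_btwn (show fH o e v < fH o e v + d / 2 by linarith)
    have hqu : PosQ o (q • e - u) := fH_lt_rat o W e he hdom hu hq1
    have hrv : PosQ o (r • e - v) := fH_lt_rat o W e he hdom hv hr1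
    have hsum : PosQ o ((q + r) • e - (u + v)) := by
      have : (q + r) • e - (u + v) = (q • e - u) + (r • e - v) := by rw [add_smul]; abel
      rw [this]; exact posQ_add o hqu hrv
    have hb : fH o e (u + v) ≤ ((q + r : ℚ) : ℝ) :=
      csSup_le (SS_ne o W e hdom (add_mem hu hv))
        (fun x hx => (mem_SS_lt o e he hx hsum).le)
    push_cast at hb
    linarith
  linarith

include he hdom in
lemma fH_nonneg {v : Fin n → ℚ} (hv : v ∈ W) (h : Nn o v) : 0 ≤ fH o e v := by
  have h0 : Nn o (v - (0 : ℚ) • e) := by simpa using h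
  have := le_fH o W e he hdom hv h0
  simpa using this

include he hdom in
lemma fH_zero : fH o e 0 = 0 := by
  have hW0 : (0 : Fin n → ℚ) ∈ W := zero_mem W
  have hle : fH o e 0 ≤ 0 := by
    apply csSup_le (SS_ne o W e hdom hW0)
    rintro x ⟨q, rfl, hq⟩
    have hq0 : q ≤ 0 := by
      by_contra hpos
      push_neg at hpos
      have h1 : PosQ o (q • e) := posQ_smul o hpos he
      have h2 : Nn o (-(q • e)) := by
        have : (0 : Fin n → ℚ) - q • e = -(q • e) := by abel
        rw [← this]; exact hq
      exact not_posQ_of_nn o h2 (by simpa using h1)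
    exact_mod_cast hq0
  have hge : 0 ≤ fH o e 0 := fH_nonneg o W e he hdom hW0 (Or.inr rfl)
  linarith

include he hdom in
lemma one_le_fH_e (heW : e ∈ W) : 1 ≤ fH o e e := by
  have h1 : Nn o (e - (1 : ℚ) • e) := Or.inr (by simp)
  have := le_fH o W e he hdom heW h1
  simpa using this

include he hdom in
lemma fH_neg {v : Fin n → ℚ} (hv : v ∈ W) : fH o e (-v) = - fH o e v := by
  have h := fH_add o W e he hdom hv (neg_mem hv)
  rw [add_neg_cancel, fH_zero o W e he hdom] at h
  linarith

include he hdom in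
lemma fH_nsmul {v : Fin n → ℚ} (hv : v ∈ W) (k : ℕ) :
    fH o e (((k : ℕ) : ℚ) • v) = (k : ℝ) * fH o e v := by
  induction k with
  | zero => simpa using fH_zero o W e he hdom
  | succ k ih =>
    have : (((k + 1 : ℕ) : ℚ)) • v = ((k : ℕ) : ℚ) • v + v := by
      push_cast; rw [add_smul, one_smul]
    rw [this, fH_add o W e he hdom (Submodule.smul_mem W _ hv) hv, ih]
    push_cast; ring

include he hdom in
lemma fH_zsmul {v : Fin n → ℚ} (hv : v ∈ W) (z : ℤ) :
    fH o e (((z : ℤ) : ℚ) • v) = (z : ℝ) * fH o e v := by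
  rcases Int.eq_nat_or_neg z with ⟨m, rfl | rfl⟩
  · exact_mod_cast fH_nsmul o W e he hdom hv m
  · push_cast [neg_smul]
    rw [fH_neg o W e he hdom (Submodule.smul_mem W _ hv), fH_nsmul o W e he hdom hv m]
    ring

include he hdom in
lemma fH_ratsmul {v : Fin n → ℚ} (hv : v ∈ W) (q : ℚ) :
    fH o e (q • v) = (q : ℝ) * fH o e v := by
  have hd : (((q.den : ℕ) : ℚ)) • (q • v) = ((q.num : ℚ)) • v := by
    rw [smul_smul]
    congr 1
    push_cast
    rw [mul_comm]
    exact Rat.mul_den_eq_num q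
  have h1 := fH_nsmul o W e he hdom (Submodule.smul_mem W q hv) q.den
  rw [hd] at h1
  have h2 := fH_zsmul o W e he hdom hv q.num
  rw [h2] at h1
  have hden : ((q.den : ℝ)) ≠ 0 := by exact Nat.cast_ne_zero.mpr q.den_pos.ne'
  have hq : (q : ℝ) = (q.num : ℝ) / (q.den : ℝ) := by rw [Rat.cast_def]
  rw [hq]
  field_simp at h1 ⊢
  linarith

end Hoelder


/-! ### Part 3: main induction -/

def lexPos : List ℝ → Prop
  | [] => False
  | x :: l => 0 < x ∨ (x = 0 ∧ lexPos l)

@[simp] lemma lexPos_nil : lexPos [] ↔ False := Iff.rfl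

@[simp] lemma lexPos_cons {x : ℝ} {l : List ℝ} :
    lexPos (x :: l) ↔ 0 < x ∨ (x = 0 ∧ lexPos l) := Iff.rfl

theorem main_ind (o : MonOrd n) :
    ∀ (k : ℕ) (W : Submodule ℚ (Fin n → ℚ)), Module.finrank ℚ W ≤ k →
    ∃ L : List ((Fin n → ℚ) →ₗ[ℚ] ℝ),
      (∀ v ∈ W, (PosQ o v ↔ lexPos (L.map fun g => g v))) ∧
      (∀ v ∈ W, (∀ g ∈ L, g v = 0) → v = 0) := by
  intro k
  induction k with
  | zero =>
    intro W hW
    have hbot : W = ⊥ := Submodule.finrank_eq_zero.mp (Nat.le_zero.mp hW)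
    subst hbot
    refine ⟨[], fun v hv => ?_, fun v hv _ => by simpa using hv⟩
    have hv0 : v = 0 := by simpa using hv
    subst hv0
    simpa using posQ_zero o
  | succ k ih =>
    intro W hW
    by_cases hbot : W = ⊥
    · subst hbot
      refine ⟨[], fun v hv => ?_, fun v hv _ => by simpa using hv⟩
      have hv0 : v = 0 := by simpa using hv
      subst hv0
      simpa using posQ_zero o
    classical
    have hm0 : Module.finrank ℚ ↥W ≠ 0 := fun h => hbot (Submodule.finrank_eq_zero.mp h)
    haveI : Nonempty (Fin (Module.finrank ℚ ↥W)) := ⟨⟨0, Nat.pos_of_ne_zero hm0⟩⟩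
    set bW := Module.finBasis ℚ ↥W with hbW
    set u : Fin (Module.finrank ℚ ↥W) → (Fin n → ℚ) := fun i => (bW i : Fin n → ℚ) with hu
    have hu0 : ∀ i, u i ≠ 0 := fun i h => bW.ne_zero i (Submodule.coe_eq_zero.mp h)
    have huW : ∀ i, u i ∈ W := fun i => (bW i).2
    have hchoice : ∀ i, PosQ o (u i) ∨ PosQ o (-(u i)) := fun i => posQ_total o (hu0 i)
    set a : Fin (Module.finrank ℚ ↥W) → (Fin n → ℚ) :=
      fun i => if PosQ o (u i) then u i else -(u i) with ha
    have ha_pos : ∀ i, PosQ o (a i) := by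
      intro i
      by_cases h : PosQ o (u i)
      · simpa [ha, h] using h
      · simpa [ha, h] using (hchoice i).resolve_left h
    have ha_mem : ∀ i, a i ∈ W := by
      intro i
      by_cases h : PosQ o (u i)
      · simpa [ha, h] using huW i
      · simpa [ha, h] using neg_mem (huW i)
    set e : Fin n → ℚ := ∑ i, a i with he_def
    have heW : e ∈ W := Submodule.sum_mem W (fun i _ => ha_mem i)
    have he : PosQ o e := posQ_sum o Finset.univ Finset.univ_nonempty a (fun i _ => ha_pos i)
    have hdom : ∀ w ∈ W, ∃ Q : ℚ, PosQ o (Q • e - w) := by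
      intro w hw
      set c : Fin (Module.finrank ℚ ↥W) → ℚ := fun i => bW.repr ⟨w, hw⟩ i with hc
      have hrepr : ∑ i, c i • u i = w := by
        have h2 := congrArg (Subtype.val) (bW.sum_repr ⟨w, hw⟩)
        rw [Submodule.coe_sum] at h2
        simpa [hc, hu] using h2
      refine ⟨(∑ j, |c j|) + 1, ?_⟩
      have hQc : ∀ i, |c i| ≤ ∑ j, |c j| :=
        fun i => Finset.single_le_sum (f := fun j => |c j|)
          (fun j _ => abs_nonneg _) (Finset.mem_univ i)
      have hsplit : ((∑ j, |c j|) + 1) • e - w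
          = ∑ i, (((∑ j, |c j|) + 1) • a i - c i • u i) := by
        rw [he_def, Finset.smul_sum, ← hrepr, ← Finset.sum_sub_distrib]
      rw [hsplit]
      apply posQ_sum o _ Finset.univ_nonempty
      intro i _
      by_cases h : PosQ o (u i)
      · have hai : a i = u i := by simp [ha, h]
        rw [hai, ← sub_smul]
        apply posQ_smul o _ h
        have h2 : c i ≤ |c i| := le_abs_self _
        have := hQc i
        linarith
      · have hai : a i = -(u i) := by simp [ha, h]
        have hneg : PosQ o (-(u i)) := (hchoice i).resolve_left h
        rw [hai]
        have hrw : ((∑ j, |c j|) + 1) • -(u i) - c i • u i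
            = ((∑ j, |c j|) + 1 + c i) • (-(u i)) := by
          module
        rw [hrw]
        apply posQ_smul o _ hneg
        have h2 : -(c i) ≤ |c i| := neg_le_abs _
        have := hQc i
        linarith
    set G : ↥W →ₗ[ℚ] ℝ :=
      { toFun := fun w => fH o e w.val,
        map_add' := fun x y => fH_add o W e he hdom x.2 y.2,
        map_smul' := fun q x => by
          simp only [SetLike.val_smul, RingHom.id_apply, Rat.smul_def]
          exact fH_ratsmul o W e he hdom x.2 q } with hG
    obtain ⟨W', hcompl⟩ := Submodule.exists_isCompl W
    set E : (Fin n → ℚ) →ₗ[ℚ] ℝ := G.comp (W.linearProjOfIsCompl W' hcompl) with hE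
    have hEW : ∀ v, ∀ hv : v ∈ W, E v = fH o e v := by
      intro v hv
      have h1 : W.linearProjOfIsCompl W' hcompl v = ⟨v, hv⟩ :=
        Submodule.linearProjOfIsCompl_apply_left hcompl ⟨v, hv⟩
      simp only [hE, LinearMap.comp_apply, h1]
      rfl
    have heK : E e ≠ 0 := by
      rw [hEW e heW]
      have := one_le_fH_e o W e he hdom heW
      linarith
    set K := LinearMap.ker E ⊓ W with hK
    have hKW : K ≤ W := inf_le_right
    have hKlt : K < W := lt_of_le_of_ne hKW (fun h => heK (by
      have : e ∈ K := h ▸ heW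
      exact LinearMap.mem_ker.mp this.1))
    haveI : FiniteDimensional ℚ ↥W := inferInstance
    have hrk : Module.finrank ℚ ↥K < Module.finrank ℚ ↥W :=
      Submodule.finrank_lt_finrank_of_lt hKlt
    obtain ⟨L', hL1, hL2⟩ := ih K (by omega)
    refine ⟨E :: L', ?_, ?_⟩
    · intro v hv
      rw [List.map_cons, lexPos_cons]
      constructor
      · intro hP
        have h0 : 0 ≤ E v := by
          rw [hEW v hv]; exact fH_nonneg o W e he hdom hv (Or.inl hP)
        rcases lt_or_eq_of_le h0 with hlt | heq
        · exact Or.inl hlt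
        · right
          refine ⟨heq.symm, ?_⟩
          exact (hL1 v ⟨LinearMap.mem_ker.mpr heq.symm, hv⟩).mp hP
      · rintro (hlt | ⟨h0, hlex⟩)
        · rw [hEW v hv] at hlt
          obtain ⟨q, hq1, hq2⟩ := exists_rat_btwn hlt
          have hq0 : 0 < q := by exact_mod_cast hq1
          have hP1 : PosQ o (v - q • e) := rat_lt_fH o W e he hdom hv hq2
          have hP2 : PosQ o (q • e) := posQ_smul o hq0 he
          have hvr : v = (v - q • e) + q • e := by abel
          rw [hvr]
          exact posQ_add o hP1 hP2
        · exact (hL1 v ⟨LinearMap.mem_ker.mpr h0, hv⟩).mpr hlex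
    · intro v hv hz
      have h0 : E v = 0 := hz E (List.mem_cons_self)
      exact hL2 v ⟨LinearMap.mem_ker.mpr h0, hv⟩
        (fun g hg => hz g (List.mem_cons_of_mem _ hg))



/-! ### Part 4: pruning and lex machinery -/

open Matrix in
lemma span_dot_zero {S : Submodule ℝ (Fin n → ℝ)} {x : Fin n → ℝ}
    (hS : ∀ u ∈ S, u ⬝ᵥ x = 0) {r : Fin n → ℝ} (hr : r ⬝ᵥ x = 0) :
    ∀ u ∈ S ⊔ Submodule.span ℝ {r}, u ⬝ᵥ x = 0 := by
  intro u hu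
  rw [Submodule.mem_sup] at hu
  obtain ⟨s, hs, t, ht, rfl⟩ := hu
  obtain ⟨c, rfl⟩ := Submodule.mem_span_singleton.mp ht
  rw [add_dotProduct, smul_dotProduct, hS s hs, hr]
  simp

open scoped Classical in
noncomputable def pruneAux : List (Fin n → ℝ) → Submodule ℝ (Fin n → ℝ) → List (Fin n → ℝ)
  | [], _ => []
  | r :: l, S =>
    if r ∈ S then pruneAux l S else r :: pruneAux l (S ⊔ Submodule.span ℝ {r})

open Matrix in
lemma pruneAux_lexPos (x : Fin n → ℝ) :
    ∀ (l : List (Fin n → ℝ)) (S : Submodule ℝ (Fin n → ℝ)), (∀ u ∈ S, u ⬝ᵥ x = 0) →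
    (lexPos ((pruneAux l S).map (· ⬝ᵥ x)) ↔ lexPos (l.map (· ⬝ᵥ x))) := by
  intro l
  induction l with
  | nil => intro S hS; exact Iff.rfl
  | cons r l ihl =>
    intro S hS
    rw [pruneAux]
    by_cases hr : r ∈ S
    · rw [if_pos hr, List.map_cons, lexPos_cons]
      have h0 : r ⬝ᵥ x = 0 := hS r hr
      rw [h0]
      simp only [lt_irrefl, false_or, true_and]
      exact ihl S hS
    · rw [if_neg hr, List.map_cons, List.map_cons, lexPos_cons, lexPos_cons]
      refine or_congr Iff.rfl (and_congr_right fun h0 => ?_)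
      exact ihl (S ⊔ Submodule.span ℝ {r}) (span_dot_zero hS h0)

open Matrix in
lemma pruneAux_vanish (x : Fin n → ℝ) :
    ∀ (l : List (Fin n → ℝ)) (S : Submodule ℝ (Fin n → ℝ)), (∀ u ∈ S, u ⬝ᵥ x = 0) →
    ((∀ r ∈ pruneAux l S, r ⬝ᵥ x = 0) ↔ (∀ r ∈ l, r ⬝ᵥ x = 0)) := by
  intro l
  induction l with
  | nil => intro S hS; simp [pruneAux]
  | cons r l ihl =>
    intro S hS
    rw [pruneAux]
    by_cases hr : r ∈ S
    · rw [if_pos hr]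
      constructor
      · intro h r' hr'
        rcases List.mem_cons.mp hr' with rfl | hm
        · exact hS r' hr
        · exact (ihl S hS).mp h r' hm
      · intro h r' hr'
        exact (ihl S hS).mpr (fun r'' h'' => h r'' (List.mem_cons_of_mem _ h'')) r' hr'
    · rw [if_neg hr]
      constructor
      · intro h r' hr'
        have h0 : r ⬝ᵥ x = 0 := h r (List.mem_cons_self)
        rcases List.mem_cons.mp hr' with rfl | hm
        · exact h0
        · exact (ihl _ (span_dot_zero hS h0)).mp
            (fun r'' h'' => h r'' (List.mem_cons_of_mem _ h'')) r' hm
      · intro h r' hr'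
        have h0 : r ⬝ᵥ x = 0 := h r (List.mem_cons_self)
        rcases List.mem_cons.mp hr' with rfl | hm
        · exact h0
        · exact (ihl _ (span_dot_zero hS h0)).mpr
            (fun r'' h'' => h r'' (List.mem_cons_of_mem _ h'')) r' hm

lemma pruneAux_good :
    ∀ (l : List (Fin n → ℝ)) (S : Submodule ℝ (Fin n → ℝ)),
      (∀ y ∈ pruneAux l S, y ∉ S) ∧ (pruneAux l S).Nodup ∧
      (LinearIndependent ℝ (fun y : {y : Fin n → ℝ // y ∈ {z | z ∈ pruneAux l S}} => (y : Fin n → ℝ))) ∧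
      Submodule.span ℝ {z | z ∈ pruneAux l S} ⊓ S = ⊥ := by
  intro l
  induction l with
  | nil =>
    intro S
    refine ⟨by simp [pruneAux], by simp [pruneAux], ?_, ?_⟩
    · have : {z : Fin n → ℝ | z ∈ pruneAux [] S} = ∅ := by simp [pruneAux]
      rw [this]
      exact linearIndependent_empty_type
    · have : {z : Fin n → ℝ | z ∈ pruneAux [] S} = ∅ := by simp [pruneAux]
      rw [this]
      simp
  | cons r l ihl =>
    intro S
    rw [pruneAux]
    by_cases hr : r ∈ S
    · rw [if_pos hr]; exact ihl S
    · rw [if_neg hr]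
      obtain ⟨hni, hnd, hli, hsp⟩ := ihl (S ⊔ Submodule.span ℝ {r})
      have hset : {z : Fin n → ℝ | z ∈ r :: pruneAux l (S ⊔ Submodule.span ℝ {r})}
          = insert r {z | z ∈ pruneAux l (S ⊔ Submodule.span ℝ {r})} := by
        ext z; simp [List.mem_cons]
      have hrs : r ∈ (S ⊔ Submodule.span ℝ {r} : Submodule ℝ (Fin n → ℝ)) :=
        Submodule.mem_sup_right (Submodule.mem_span_singleton_self r)
      have hrnotspan : r ∉ Submodule.span ℝ {z | z ∈ pruneAux l (S ⊔ Submodule.span ℝ {r})} := by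
        intro hmem
        have : r ∈ Submodule.span ℝ {z | z ∈ pruneAux l (S ⊔ Submodule.span ℝ {r})}
            ⊓ (S ⊔ Submodule.span ℝ {r}) := ⟨hmem, hrs⟩
        rw [hsp] at this
        have : r = 0 := this
        exact hr (this ▸ zero_mem S)
      refine ⟨?_, ?_, ?_, ?_⟩
      · intro y hy
        rcases List.mem_cons.mp hy with rfl | hm
        · exact hr
        · intro hyS
          exact hni y hm (Submodule.mem_sup_left hyS)
      · refine List.Nodup.cons ?_ hnd
        intro hmem
        exact hrnotspan (Submodule.subset_span hmem)
      · rw [hset]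
        exact linearIndependent_set_coe_iff.mpr (LinearIndepOn.id_insert (linearIndependent_set_coe_iff.mp hli) hrnotspan)
      · rw [hset]
        rw [eq_bot_iff]
        rintro z ⟨hz1, hz2⟩
        simp only [SetLike.mem_coe] at hz1 hz2
        rw [Submodule.mem_span_insert] at hz1
        obtain ⟨c, y, hy, rfl⟩ := hz1
        have hyS : y ∈ Submodule.span ℝ {z | z ∈ pruneAux l (S ⊔ Submodule.span ℝ {r})}
            ⊓ (S ⊔ Submodule.span ℝ {r}) := by
          refine ⟨hy, ?_⟩
          have h1 : c • r ∈ S ⊔ Submodule.span ℝ {r} :=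
            Submodule.smul_mem _ c hrs
          have h2 : (c • r + y) ∈ S ⊔ Submodule.span ℝ {r} := Submodule.mem_sup_left hz2
          have := sub_mem h2 h1
          simpa using this
        rw [hsp] at hyS
        have hy0 : y = 0 := hyS
        subst hy0
        rw [add_zero] at hz2 ⊢
        rcases eq_or_ne c 0 with rfl | hc
        · simp
        · exfalso
          have : r ∈ S := by
            have := S.smul_mem c⁻¹ hz2
            rwa [smul_smul, inv_mul_cancel₀ hc, one_smul] at this
          exact hr this

lemma lexPos_append : ∀ (l₁ l₂ : List ℝ),
    lexPos (l₁ ++ l₂) ↔ lexPos l₁ ∨ ((∀ x ∈ l₁, x = 0) ∧ lexPos l₂) := by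
  intro l₁ l₂
  induction l₁ with
  | nil => simp
  | cons x l ih =>
    rw [List.cons_append, lexPos_cons, ih, lexPos_cons]
    simp only [List.forall_mem_cons]
    tauto

lemma lexPos_ofFn_iff : ∀ {m : ℕ} (x : Fin m → ℝ),
    lexPos (List.ofFn x) ↔ ∃ i, (∀ j, j < i → x j = 0) ∧ 0 < x i := by
  intro m
  induction m with
  | zero => intro x; simp [List.ofFn_zero]
  | succ m ih =>
    intro x
    rw [List.ofFn_succ, lexPos_cons, ih]
    constructor
    · rintro (h0 | ⟨h0, i, hj, hi⟩)
      · exact ⟨0, fun j hj => absurd hj (Fin.not_lt_zero j), h0⟩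
      · refine ⟨i.succ, ?_, hi⟩
        intro j hjlt
        induction j using Fin.cases with
        | zero => exact h0
        | succ j' =>
          exact hj j' (by rwa [Fin.succ_lt_succ_iff] at hjlt)
    · rintro ⟨i, hj, hi⟩
      induction i using Fin.cases with
      | zero => exact Or.inl hi
      | succ i' =>
        right
        refine ⟨hj 0 (Fin.succ_pos i'), i', fun j hjlt => hj j.succ ?_, hi⟩
        rwa [Fin.succ_lt_succ_iff]



open Matrix in
lemma row_dot (g : (Fin n → ℚ) →ₗ[ℚ] ℝ) (v : Fin n → ℚ) :
    (fun j => g (Pi.single j 1)) ⬝ᵥ (fun j => ((v j : ℚ) : ℝ)) = g v := by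
  classical
  have hv : v = ∑ j, Pi.single j (v j) := by rw [Finset.univ_sum_single]
  conv_rhs => rw [hv]
  rw [map_sum, dotProduct]
  apply Finset.sum_congr rfl
  intro j _
  have h1 : Pi.single j (v j) = v j • (Pi.single j (1 : ℚ) : Fin n → ℚ) := by
    rw [← Pi.single_smul, smul_eq_mul, mul_one]
  rw [h1, _root_.map_smul, Rat.smul_def, mul_comm]

end MonOrdProof

open MonOrdProof Matrix in
/-- Every monomial ordering is of the form `>_M` for an invertible real matrix `M`:
`x^α > x^β` iff `Mα` is lexicographically greater than `Mβ` in `ℝ^n`. -/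
theorem monomial_order_eq_matrix_order {n : ℕ} (o : MonOrd n) :
    ∃ M : Matrix (Fin n) (Fin n) ℝ, IsUnit M ∧
      ∀ a b : Fin n →₀ ℕ, o.lt a b ↔
        toLex (M.mulVec fun i => (a i : ℝ)) < toLex (M.mulVec fun i => (b i : ℝ)) := by
  classical
  rcases Nat.eq_zero_or_pos n with rfl | hn
  · refine ⟨1, isUnit_one, ?_⟩
    intro a b
    have hab : a = b := by ext i; exact i.elim0
    subst hab
    exact iff_of_false (o.irrefl a) (lt_irrefl _)
  haveI : Nonempty (Fin n) := Fin.pos_iff_nonempty.mp hn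
  obtain ⟨L, hL1, hL2⟩ := MonOrdProof.main_ind o
    (Module.finrank ℚ ↥(⊤ : Submodule ℚ (Fin n → ℚ))) ⊤ le_rfl
  set rowF : ((Fin n → ℚ) →ₗ[ℚ] ℝ) → (Fin n → ℝ) :=
    fun g => fun j => g (Pi.single j 1) with hrowF
  set l0 : List (Fin n → ℝ) := L.map rowF with hl0
  have hbotdot : ∀ x : Fin n → ℝ, ∀ u ∈ (⊥ : Submodule ℝ (Fin n → ℝ)), u ⬝ᵥ x = 0 := by
    intro x u hu
    have hu0 : u = 0 := by simpa using hu
    simp [hu0]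
  obtain ⟨hks_notbot, hks_nodup, hks_li, hks_sp⟩ := pruneAux_good l0 ⊥
  set ks : List (Fin n → ℝ) := pruneAux l0 ⊥ with hks
  set sks : Set (Fin n → ℝ) := {z | z ∈ ks} with hsks
  have hset_li : LinearIndependent ℝ (fun y : sks => (y : Fin n → ℝ)) := hks_li
  have hset_li' : LinearIndepOn ℝ id sks := linearIndependent_set_coe_iff.mp hset_li
  set bs := hset_li'.extend (Set.subset_univ sks) with hbs
  have hsksb : sks ⊆ bs := hset_li'.subset_extend _
  have hbli : LinearIndependent ℝ (Subtype.val : bs → (Fin n → ℝ)) :=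
    linearIndependent_set_coe_iff.mpr (hset_li'.linearIndepOn_extend _)
  have hbspan : ⊤ ≤ Submodule.span ℝ bs := by
    intro x _
    exact hset_li'.subset_span_extend (Set.subset_univ sks) (Set.mem_univ x)
  have hbfin : bs.Finite := hbli.setFinite
  haveI : Fintype bs := hbfin.fintype
  have hcard : Fintype.card bs = n := by
    have hB : Module.Basis bs ℝ (Fin n → ℝ) := Module.Basis.mk hbli (by rwa [Subtype.range_coe])
    have h1 := Module.finrank_eq_card_basis hB
    rw [Module.finrank_pi] at h1
    simpa using h1.symm
  set lrest := (hbfin.toFinset \ ks.toFinset).toList with hlrest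
  have hlrest_mem : ∀ x, x ∈ lrest ↔ (x ∈ bs ∧ x ∉ ks) := by
    intro x
    rw [hlrest, Finset.mem_toList, Finset.mem_sdiff, Set.Finite.mem_toFinset,
      List.mem_toFinset]
  set full := ks ++ lrest with hfull
  have hsub : ks.toFinset ⊆ hbfin.toFinset := by
    intro x hx
    rw [Set.Finite.mem_toFinset]
    exact hsksb (by rwa [hsks, Set.mem_setOf_eq, ← List.mem_toFinset])
  have hlen : full.length = n := by
    rw [hfull, List.length_append]
    have h1 : lrest.length = hbfin.toFinset.card - ks.toFinset.card := by
      rw [hlrest, Finset.length_toList, Finset.card_sdiff_of_subset hsub]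
    have h2 : ks.toFinset.card = ks.length := List.toFinset_card_of_nodup hks_nodup
    have h3 : hbfin.toFinset.card = n := by
      rw [Set.Finite.card_toFinset]; simpa using hcard
    have h4 : ks.toFinset.card ≤ hbfin.toFinset.card := Finset.card_le_card hsub
    omega
  have hfull_mem : ∀ x, x ∈ full ↔ x ∈ bs := by
    intro x
    rw [hfull, List.mem_append, hlrest_mem]
    constructor
    · rintro (h | ⟨h, _⟩)
      · exact hsksb h
      · exact h
    · intro h
      by_cases hk : x ∈ ks
      · exact Or.inl hk
      · exact Or.inr ⟨h, hk⟩
  have hfull_nodup : full.Nodup := by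
    rw [hfull]
    refine List.Nodup.append hks_nodup (Finset.nodup_toList _) ?_
    intro x hx hx'
    exact ((hlrest_mem x).mp hx').2 hx
  have hget_inj : Function.Injective full.get := List.nodup_iff_injective_get.mp hfull_nodup
  set R : Fin n → (Fin n → ℝ) := fun i => full.get (Fin.cast hlen.symm i) with hR
  have hR_inj : Function.Injective R := by
    intro i j hij
    have h1 := hget_inj hij
    have h2 := congrArg Fin.val h1
    simpa [Fin.ext_iff] using h2
  have hR_mem : ∀ i, R i ∈ bs := fun i => (hfull_mem _).mp (List.get_mem full _)
  have hR_li : LinearIndependent ℝ R :=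
    hbli.comp (fun i => (⟨R i, hR_mem i⟩ : bs))
      (fun i j hij => hR_inj (congrArg Subtype.val hij))
  set M : Matrix (Fin n) (Fin n) ℝ := Matrix.of (fun i j => R i j) with hM
  have hMunit : IsUnit M := by
    have hcard2 : Fintype.card (Fin n) = Module.finrank ℝ (Fin n → ℝ) := by
      simp [Module.finrank_pi]
    set B2 := basisOfLinearIndependentOfCardEqFinrank hR_li hcard2 with hB2
    have hBM : (Pi.basisFun ℝ (Fin n)).toMatrix ⇑B2 = M.transpose := by
      ext i j
      rw [Module.Basis.toMatrix_apply, Pi.basisFun_repr, hB2,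
        coe_basisOfLinearIndependentOfCardEqFinrank]
      rfl
    have hinv : Invertible ((Pi.basisFun ℝ (Fin n)).toMatrix ⇑B2) :=
      (Pi.basisFun ℝ (Fin n)).invertibleToMatrix B2
    have hunit : IsUnit M.transpose := by rw [← hBM]; exact isUnit_of_invertible _
    rw [Matrix.isUnit_iff_isUnit_det] at hunit ⊢
    rwa [Matrix.det_transpose] at hunit
  refine ⟨M, hMunit, ?_⟩
  intro a b
  rcases eq_or_ne a b with rfl | hab
  · exact iff_of_false (o.irrefl a) (lt_irrefl _)
  set vq : Fin n → ℚ := fun i => (b i : ℚ) - (a i : ℚ) with hvq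
  have hvq0 : vq ≠ 0 := by
    intro h
    apply hab
    ext i
    have h1 := congrFun h i
    rw [hvq] at h1
    have h2 : (a i : ℚ) = (b i : ℚ) := by
      have := sub_eq_zero.mp h1
      linarith [this]
    exact_mod_cast h2
  set d : Fin n → ℝ := fun j => ((vq j : ℚ) : ℝ) with hd
  have hmapeq : l0.map (· ⬝ᵥ d) = L.map (fun g => g vq) := by
    rw [hl0, List.map_map]
    apply List.map_congr_left
    intro g _
    exact row_dot g vq
  have hPos : PosQ o vq ↔ lexPos (ks.map (· ⬝ᵥ d)) := by
    rw [hL1 vq trivial, ← hmapeq]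
    exact (pruneAux_lexPos d l0 ⊥ (hbotdot d)).symm
  have hks_nz : ¬ (∀ r ∈ ks, r ⬝ᵥ d = 0) := by
    intro hz
    have h1 : ∀ r ∈ l0, r ⬝ᵥ d = 0 := (pruneAux_vanish d l0 ⊥ (hbotdot d)).mp hz
    have h2 : ∀ g ∈ L, g vq = 0 := by
      intro g hg
      have h3 := h1 (rowF g) (List.mem_map_of_mem hg)
      rwa [row_dot] at h3
    exact hvq0 (hL2 vq trivial h2)
  have hfull_lex : lexPos (full.map (· ⬝ᵥ d)) ↔ lexPos (ks.map (· ⬝ᵥ d)) := by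
    rw [hfull, List.map_append, lexPos_append]
    constructor
    · rintro (h | ⟨hz, _⟩)
      · exact h
      · exact absurd (fun r hr => hz (r ⬝ᵥ d) (List.mem_map_of_mem hr)) hks_nz
    · exact Or.inl
  have hmv : ∀ i, M.mulVec (fun j => (b j : ℝ)) i - M.mulVec (fun j => (a j : ℝ)) i
      = R i ⬝ᵥ d := by
    intro i
    show (fun j => R i j) ⬝ᵥ _ - (fun j => R i j) ⬝ᵥ _ = _
    rw [← dotProduct_sub]
    congr 1
    funext j
    rw [hd, hvq]
    push_cast
    simp [Pi.sub_apply]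
  have hofn : List.ofFn (fun i => R i ⬝ᵥ d) = full.map (· ⬝ᵥ d) := by
    have h1 : List.ofFn R = full := by
      apply List.ext_getElem (by simp [hlen])
      intro i h1 h2
      rw [List.getElem_ofFn]
      rfl
    rw [← h1, List.map_ofFn]
    rfl
  have hbridge : (toLex (M.mulVec fun i => (a i : ℝ)) < toLex (M.mulVec fun i => (b i : ℝ)))
      ↔ lexPos (List.ofFn fun i => R i ⬝ᵥ d) := by
    rw [lexPos_ofFn_iff]
    have hdef : (toLex (M.mulVec fun i => (a i : ℝ)) < toLex (M.mulVec fun i => (b i : ℝ)))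
        ↔ ∃ i, (∀ j, j < i → M.mulVec (fun k => (a k : ℝ)) j = M.mulVec (fun k => (b k : ℝ)) j)
          ∧ M.mulVec (fun k => (a k : ℝ)) i < M.mulVec (fun k => (b k : ℝ)) i := Iff.rfl
    rw [hdef]
    apply exists_congr
    intro i
    constructor
    · rintro ⟨hj, hi⟩
      refine ⟨fun j hjlt => ?_, ?_⟩
      · rw [← hmv j, hj j hjlt, sub_self]
      · rw [← hmv i]
        exact sub_pos.mpr hi
    · rintro ⟨hj, hi⟩
      refine ⟨fun j hjlt => ?_, ?_⟩
      · have h1 := hj j hjlt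
        rw [← hmv j] at h1
        exact (sub_eq_zero.mp h1).symm
      · rw [← hmv i] at hi
        exact sub_pos.mp hi
  rw [lt_iff_posQ o a b, hbridge, hofn, hfull_lex, ← hPos]
end

section
/- Let > be a local degree ordering on K[[x_1,...,x_n]]. Given a (possibly infinite) chain of reductions g → h_1 → h_2 → ... with respect to a subset G of the maximal ideal, where h_m = g − Σ_{i=1}^m a_i G^{α_i} and LM(a_1 G^{α_1}) > LM(a_2 G^{α_2}) > ..., the sequence of partial sums s_m = Σ_{i=1}^m a_i G^{α_i} converges in the 𝔪-adic topology of K[[x_1,...,x_n]]. -/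
/-- `o` is a local ordering: `x^a < 1` for all `a ≠ 0`. -/
def MonOrd.IsLocal {n : ℕ} (o : MonOrd n) : Prop :=
  ∀ a : Fin n →₀ ℕ, a ≠ 0 → o.lt a 0

/-- `o` is degree-compatible: `x^a > x^b` implies `deg x^a ≤ deg x^b`. -/
def MonOrd.IsDegree {n : ℕ} (o : MonOrd n) : Prop :=
  ∀ a b : Fin n →₀ ℕ, o.lt b a → Finsupp.degree a ≤ Finsupp.degree b

/-- Leading-monomial predicate for formal power series: `α` is the exponent of the
leading monomial of `f` with respect to `o`. -/
def IsLMser {K : Type*} [Field K] {n : ℕ} (o : MonOrd n)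
    (f : MvPowerSeries (Fin n) K) (α : Fin n →₀ ℕ) : Prop :=
  MvPowerSeries.coeff α f ≠ 0 ∧
    ∀ β, MvPowerSeries.coeff β f ≠ 0 → β ≠ α → o.lt β α

/-- The maximal ideal `𝔪` of `K[[x₁,…,xₙ]]`. -/
noncomputable def mIdeal (n : ℕ) (K : Type*) [Field K] : Ideal (MvPowerSeries (Fin n) K) :=
  RingHom.ker (MvPowerSeries.constantCoeff (σ := Fin n) (R := K))

/-- `f = Q(g₁,…,g_s)`: for every `d`, `f` agrees with the evaluation at `g` of the
truncation of `Q` below total degree `d`, modulo `𝔪^d`.  (Since the `gᵢ` lie in `𝔪`,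
this is the `𝔪`-adic evaluation of the power series `Q` at `g`.) -/
def IsSubstEval {K : Type*} [Field K] {s n : ℕ} (Q : MvPowerSeries (Fin s) K)
    (g : Fin s → MvPowerSeries (Fin n) K) (f : MvPowerSeries (Fin n) K) : Prop :=
  ∀ d : ℕ, ∀ P : MvPolynomial (Fin s) K,
    (∀ α, Finsupp.degree α < d → P.coeff α = MvPowerSeries.coeff α Q) →
    (∀ α, d ≤ Finsupp.degree α → P.coeff α = 0) →
    f - MvPolynomial.aeval g P ∈ (mIdeal n K) ^ d


lemma finsupp_degree_add {n : ℕ} (a b : Fin n →₀ ℕ) :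
    Finsupp.degree (a + b) = Finsupp.degree a + Finsupp.degree b := by
  simp only [Finsupp.degree_eq_weight_one, map_add]

lemma finsupp_degree_single_one {n : ℕ} (j : Fin n) :
    Finsupp.degree (Finsupp.single j 1) = 1 := by
  exact Finsupp.degree_single j 1

/-- A power series all of whose coefficients of total degree `< d` vanish lies in `𝔪^d`. -/
lemma mem_mIdeal_pow {K : Type*} [Field K] {n : ℕ} (d : ℕ) (f : MvPowerSeries (Fin n) K)
    (h : ∀ β : Fin n →₀ ℕ, Finsupp.degree β < d → MvPowerSeries.coeff β f = 0) :
    f ∈ (mIdeal n K) ^ d := by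
  classical
  induction d generalizing f with
  | zero => simp
  | succ d ih =>
    set g : Fin n → MvPowerSeries (Fin n) K := fun j γ =>
      if ∀ k < j, γ k = 0 then MvPowerSeries.coeff (γ + Finsupp.single j 1) f else 0 with hg
    have hcoeffg : ∀ j γ, MvPowerSeries.coeff γ (g j) =
        if ∀ k < j, γ k = 0 then MvPowerSeries.coeff (γ + Finsupp.single j 1) f else 0 :=
      fun j γ => rfl
    have hf : f = ∑ j : Fin n, MvPowerSeries.X j * g j := by
      ext β
      rw [map_sum]
      have hX : ∀ j : Fin n, MvPowerSeries.coeff β (MvPowerSeries.X j * g j) =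
          if Finsupp.single j 1 ≤ β then
            MvPowerSeries.coeff (β - Finsupp.single j 1) (g j) else 0 := by
        intro j
        rw [MvPowerSeries.X, MvPowerSeries.coeff_monomial_mul]
        split_ifs <;> simp
      rcases eq_or_ne β 0 with rfl | hβ0
      · have h0 : MvPowerSeries.coeff (0 : Fin n →₀ ℕ) f = 0 := by
          apply h; simp
        rw [h0]
        refine (Finset.sum_eq_zero fun j _ => ?_).symm
        rw [hX j, if_neg]
        intro hle
        have := hle j
        simp [Finsupp.single_apply] at this
      · have hsupp : β.support.Nonempty := Finsupp.support_nonempty_iff.mpr hβ0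
        set j0 := β.support.min' hsupp with hj0
        have hj0mem : j0 ∈ β.support := β.support.min'_mem hsupp
        have hβj0 : β j0 ≠ 0 := Finsupp.mem_support_iff.mp hj0mem
        have hmin : ∀ k ∈ β.support, j0 ≤ k := fun k hk => β.support.min'_le k hk
        have hlt0 : ∀ k < j0, β k = 0 := by
          intro k hk
          by_contra hc
          exact absurd (hmin k (Finsupp.mem_support_iff.mpr hc)) (not_le.mpr hk)
        rw [Finset.sum_eq_single_of_mem j0 (Finset.mem_univ _)]
        · rw [hX j0, if_pos, hcoeffg, if_pos, tsub_add_cancel_of_le]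
          · exact Finsupp.single_le_iff.mpr (Nat.one_le_iff_ne_zero.mpr hβj0)
          · intro k hk
            simp [Finsupp.tsub_apply, hlt0 k hk]
          · exact Finsupp.single_le_iff.mpr (Nat.one_le_iff_ne_zero.mpr hβj0)
        · intro j _ hjne
          rw [hX j]
          split_ifs with hle
          · rw [hcoeffg, if_neg]
            intro hcond
            -- from hcond : ∀ k < j, (β - single j 1) k = 0
            have hβk : ∀ k < j, β k = 0 := by
              intro k hk
              have := hcond k hk
              rwa [Finsupp.tsub_apply, Finsupp.single_apply,
                if_neg (fun (h : j = k) => lt_irrefl k (h ▸ hk)), Nat.sub_zero] at this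
            have hjβ : β j ≠ 0 := by
              have := Finsupp.single_le_iff.mp hle
              omega
            have hj0le : j0 ≤ j := hmin j (Finsupp.mem_support_iff.mpr hjβ)
            rcases lt_or_eq_of_le hj0le with hlt | heq
            · exact hβj0 (hβk j0 hlt)
            · exact hjne heq.symm
          · rfl
    rw [hf]
    refine Ideal.sum_mem _ fun j _ => ?_
    rw [pow_succ']
    refine Ideal.mul_mem_mul ?_ (ih (g j) ?_)
    · show MvPowerSeries.X j ∈ RingHom.ker (MvPowerSeries.constantCoeff (σ := Fin n) (R := K))
      rw [RingHom.mem_ker]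
      exact MvPowerSeries.constantCoeff_X j
    · intro γ hγ
      rw [hcoeffg]
      split_ifs with hcond
      · apply h
        rw [finsupp_degree_add, finsupp_degree_single_one]
        omega
      · rfl

/-- Along a (possibly infinite) chain of reductions with respect to `G ⊂ 𝔪 \ {0}`,
with strictly decreasing leading monomials `LM(a₁G^{α₁}) > LM(a₂G^{α₂}) > …` for a local
degree ordering, the sequence of partial sums `s_m = Σ_{i<m} aᵢ G^{αᵢ}` converges in the
`𝔪`-adic topology. -/
theorem partial_sums_of_reduction_chain_converge {K : Type*} [Field K] {n : ℕ}
    (o : MonOrd n) (hloc : o.IsLocal) (hdeg : o.IsDegree)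
    (G : Set (MvPowerSeries (Fin n) K))
    (hG : ∀ g ∈ G, g ≠ 0 ∧ MvPowerSeries.constantCoeff (σ := Fin n) (R := K) g = 0)
    (a : ℕ → K) (t : ℕ → MvPowerSeries (Fin n) K) (α : ℕ → (Fin n →₀ ℕ))
    (ha : ∀ i, a i ≠ 0) (ht : ∀ i, t i ∈ Submonoid.closure G)
    (hlm : ∀ i, IsLMser o (a i • t i) (α i))
    (hdec : ∀ i, o.lt (α (i + 1)) (α i)) :
    ∃ s : MvPowerSeries (Fin n) K, ∀ d : ℕ, ∃ N : ℕ, ∀ m ≥ N,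
      s - ∑ i ∈ Finset.range m, a i • t i ∈ (mIdeal n K) ^ d := by
  classical
  -- strict decrease along the chain
  have hlt : ∀ i j, i < j → o.lt (α j) (α i) := by
    intro i j hij
    induction j with
    | zero => omega
    | succ j ihj =>
      rcases Nat.lt_succ_iff_lt_or_eq.mp hij with h' | rfl
      · exact o.trans _ _ _ (hdec j) (ihj h')
      · exact hdec i
  have hinj : Function.Injective α := by
    intro i j hij
    by_contra hne
    rcases lt_trichotomy i j with h' | h' | h'
    · exact o.irrefl (α i) (hij ▸ hlt i j h')
    · exact hne h'
    · exact o.irrefl (α j) (hij ▸ hlt j i h')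
  -- coefficients below the leading monomial's degree vanish
  have hvanish : ∀ i (β : Fin n →₀ ℕ), Finsupp.degree β < Finsupp.degree (α i) →
      MvPowerSeries.coeff β (a i • t i) = 0 := by
    intro i β hβ
    by_contra hc
    rcases eq_or_ne β (α i) with rfl | hne
    · exact lt_irrefl _ hβ
    · have := hdeg (α i) β ((hlm i).2 β hc hne)
      omega
  -- degrees of the α i eventually exceed any bound
  have hN : ∀ d : ℕ, ∃ N : ℕ, ∀ i, N ≤ i → d ≤ Finsupp.degree (α i) := by
    intro d
    have hfin : {β : Fin n →₀ ℕ | Finsupp.degree β ≤ d}.Finite :=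
      Finsupp.finite_of_degree_le d
    have hfin2 : (α ⁻¹' {β : Fin n →₀ ℕ | Finsupp.degree β ≤ d}).Finite :=
      Set.Finite.preimage hinj.injOn hfin
    refine ⟨hfin2.toFinset.sup id + 1, fun i hi => ?_⟩
    by_contra hc
    have hmem : i ∈ hfin2.toFinset := by
      rw [Set.Finite.mem_toFinset]
      exact le_of_lt (not_le.mp hc)
    have := Finset.le_sup (f := id) hmem
    simp only [id] at this
    omega
  choose N hNs using hN
  set c : (Fin n →₀ ℕ) → ℕ → K := fun β i => MvPowerSeries.coeff β (a i • t i) with hc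
  set s : MvPowerSeries (Fin n) K := fun β => ∑ᶠ i, c β i with hs
  refine ⟨s, fun d => ⟨N d, fun m hm => ?_⟩⟩
  apply mem_mIdeal_pow
  intro β hβ
  have hsupp : Function.support (c β) ⊆ ↑(Finset.range m) := by
    intro i hi
    simp only [Finset.coe_range, Set.mem_Iio]
    by_contra hge
    have hNd : N d ≤ i := le_trans hm (not_lt.mp hge)
    have : d ≤ Finsupp.degree (α i) := hNs d i hNd
    exact hi (hvanish i β (by omega))
  have hfs : ∑ᶠ i, c β i = ∑ i ∈ Finset.range m, c β i :=
    finsum_eq_sum_of_support_subset _ hsupp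
  have hlhs : MvPowerSeries.coeff β
      (s - ∑ i ∈ Finset.range m, a i • t i)
      = (∑ᶠ i, c β i) - ∑ i ∈ Finset.range m, c β i := by
    rw [map_sub, map_sum]
    rfl
  rw [hlhs, hfs, sub_self]
end

section
/- Let > be a local degree ordering on K[x_1,...,x_n]_> ⊂ K[[x_1,...,x_n]] and let G = {g_1,...,g_s} ⊂ K[x_1,...,x_n]. If S is a Sasbi basis of the localized subalgebra K[G]_> = (S_> ∩ K[g_1,...,g_s])^{-1} K[g_1,...,g_s], then S is also a Sasbi basis of the complete subalgebra K[[G]] ⊂ K[[x_1,...,x_n]]. -/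
/-- Leading-monomial predicate for polynomials. -/
def IsLM {K : Type*} [Field K] {n : ℕ} (o : MonOrd n)
    (f : MvPolynomial (Fin n) K) (α : Fin n →₀ ℕ) : Prop :=
  f.coeff α ≠ 0 ∧ ∀ β, f.coeff β ≠ 0 → β ≠ α → o.lt β α


-- Auxiliary lemmas ------------------------------------------------------

lemma Finsupp.degree_add'' {σ : Type*} (a b : σ →₀ ℕ) :
    Finsupp.degree (a + b) = Finsupp.degree a + Finsupp.degree b := by
  simp [Finsupp.degree_eq_weight_one, map_add]

lemma lt_of_deg_lt {n : ℕ} (o : MonOrd n) (hdeg : o.IsDegree) {α β : Fin n →₀ ℕ}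
    (h : Finsupp.degree α < Finsupp.degree β) : o.lt β α := by
  have hne : β ≠ α := by rintro rfl; omega
  rcases o.total β α hne with h' | h'
  · exact h'
  · exact absurd (hdeg β α h') (by omega)

lemma coeff_eq_zero_of_mem_mpow {K : Type*} [Field K] {n : ℕ} :
    ∀ (d : ℕ) (h : MvPowerSeries (Fin n) K), h ∈ (mIdeal n K) ^ d →
    ∀ β : Fin n →₀ ℕ, Finsupp.degree β < d → MvPowerSeries.coeff β h = 0 := by
  intro d
  induction d with
  | zero => intro h _ β hβ; omega
  | succ d ih =>
    intro h hh
    rw [pow_succ] at hh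
    refine Submodule.mul_induction_on hh (fun a ha b hb β hβ => ?_)
      (fun x y hx hy β hβ => by rw [map_add, hx β hβ, hy β hβ, add_zero])
    rw [MvPowerSeries.coeff_mul]
    apply Finset.sum_eq_zero
    rintro ⟨β1, β2⟩ hmem
    rw [Finset.HasAntidiagonal.mem_antidiagonal] at hmem
    by_cases h1 : Finsupp.degree β1 < d
    · rw [ih a ha β1 h1, zero_mul]
    · have hsum : Finsupp.degree β1 + Finsupp.degree β2 = Finsupp.degree β := by
        rw [← Finsupp.degree_add'', hmem]
      have hβ2 : Finsupp.degree β2 = 0 := by omega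
      have hz : β2 = 0 := (Finsupp.degree_eq_zero_iff _).mp hβ2
      subst hz
      have hb0 : MvPowerSeries.coeff 0 b = 0 := by
        simpa [mIdeal, RingHom.mem_ker, MvPowerSeries.coeff_zero_eq_constantCoeff] using hb
      rw [hb0, mul_zero]

lemma exists_max_finset {n : ℕ} (o : MonOrd n) (t : Finset (Fin n →₀ ℕ)) (ht : t.Nonempty) :
    ∃ a ∈ t, ∀ b ∈ t, b ≠ a → o.lt b a := by
  induction t using Finset.induction_on with
  | empty => simp at ht
  | insert a t hat ih =>
    rcases t.eq_empty_or_nonempty with rfl | htne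
    · exact ⟨a, by simp, by simp⟩
    obtain ⟨m, hm, hmax⟩ := ih htne
    have hne : a ≠ m := fun h => hat (h ▸ hm)
    rcases o.total a m hne with h | h
    · refine ⟨m, Finset.mem_insert_of_mem hm, fun b hb hbm => ?_⟩
      rcases Finset.mem_insert.mp hb with rfl | hb'
      · exact h
      · exact hmax b hb' hbm
    · refine ⟨a, Finset.mem_insert_self a t, fun b hb hba => ?_⟩
      rcases Finset.mem_insert.mp hb with rfl | hb'
      · exact absurd rfl hba
      rcases eq_or_ne b m with rfl | hbm
      · exact h
      · exact o.trans _ _ _ (hmax b hb' hbm) h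

lemma exists_IsLMser {K : Type*} [Field K] {n : ℕ} (o : MonOrd n) (hdeg : o.IsDegree)
    (f : MvPowerSeries (Fin n) K) (hf : f ≠ 0) :
    ∃ α, IsLMser o f α ∧
      ∀ β, MvPowerSeries.coeff β f ≠ 0 → Finsupp.degree α ≤ Finsupp.degree β := by
  have hex : ∃ β, MvPowerSeries.coeff β f ≠ 0 := by
    by_contra h
    push_neg at h
    exact hf (MvPowerSeries.ext fun β => by rw [h β, map_zero])
  obtain ⟨β0, hβ0⟩ := hex
  have hD : ∃ d : ℕ, ∃ β, Finsupp.degree β = d ∧ MvPowerSeries.coeff β f ≠ 0 :=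
    ⟨Finsupp.degree β0, β0, rfl, hβ0⟩
  classical
  set d0 := Nat.find hD with hd0
  obtain ⟨β1, hβ1deg, hβ1⟩ := Nat.find_spec hD
  have hmin : ∀ β, MvPowerSeries.coeff β f ≠ 0 → d0 ≤ Finsupp.degree β := by
    intro β hβ
    by_contra h
    exact Nat.find_min hD (by omega) ⟨β, rfl, hβ⟩
  have hfin : {β : Fin n →₀ ℕ | Finsupp.degree β ≤ d0}.Finite := Finsupp.finite_of_degree_le d0
  have hTfin : {β : Fin n →₀ ℕ | Finsupp.degree β = d0 ∧ MvPowerSeries.coeff β f ≠ 0}.Finite :=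
    hfin.subset (fun β hβ => le_of_eq hβ.1)
  have hne : hTfin.toFinset.Nonempty := ⟨β1, by simp [Set.Finite.mem_toFinset]; exact ⟨hβ1deg, hβ1⟩⟩
  obtain ⟨α, hαt, hαmax⟩ := exists_max_finset o hTfin.toFinset hne
  rw [Set.Finite.mem_toFinset] at hαt
  refine ⟨α, ⟨hαt.2, fun β hβ hβα => ?_⟩, fun β hβ => hαt.1 ▸ hmin β hβ⟩
  rcases eq_or_lt_of_le (hmin β hβ) with heq | hlt
  · exact hαmax β (by rw [Set.Finite.mem_toFinset]; exact ⟨heq.symm, hβ⟩) hβα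
  · have h2 : Finsupp.degree α = d0 := hαt.1
    exact lt_of_deg_lt o hdeg (by omega)

lemma coe_algHom_eq {K : Type*} [Field K] {n : ℕ} (r : MvPolynomial (Fin n) K) :
    MvPolynomial.coeToMvPowerSeries.algHom (σ := Fin n) K r = (r : MvPowerSeries (Fin n) K) := by
  rw [MvPolynomial.coeToMvPowerSeries.algHom_apply, Algebra.algebraMap_self, MvPowerSeries.map_id]
  rfl

/-- If `S` is a Sasbi basis of the localized subalgebra `K[G]_>`
(elements of `K[G]_>` are the power series `f` with `u·f = p` for some `u, p ∈ K[G]`,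
`LM(u) = 1`; their leading monomials are exactly those of nonzero elements of `K[G]`),
then `S` is a Sasbi basis of the complete subalgebra `K[[G]]`. -/
theorem sasbi_of_localization_is_sasbi_of_completion {K : Type*} [Field K] {n s : ℕ}
    (o : MonOrd n) (hloc : o.IsLocal) (hdeg : o.IsDegree)
    (g : Fin s → MvPolynomial (Fin n) K)
    (S : Set (MvPowerSeries (Fin n) K))
    -- `S ⊆ K[G]_>` :
    (hSmem : ∀ f ∈ S, ∃ u p : MvPolynomial (Fin n) K,
        u ∈ Algebra.adjoin K (Set.range g) ∧ p ∈ Algebra.adjoin K (Set.range g) ∧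
        IsLM o u 0 ∧ (u : MvPowerSeries (Fin n) K) * f = (p : MvPowerSeries (Fin n) K))
    -- `S` is a Sasbi basis of `K[G]_>` :
    (hSasbi : ∀ p : MvPolynomial (Fin n) K, p ∈ Algebra.adjoin K (Set.range g) → p ≠ 0 →
        ∃ q ∈ Submonoid.closure S, ∃ α, IsLM o p α ∧ IsLMser o q α) :
    -- `S` is a Sasbi basis of `K[[G]]` :
    ∀ f : MvPowerSeries (Fin n) K,
      (∃ Q, IsSubstEval Q (fun i => ((g i : MvPowerSeries (Fin n) K))) f) → f ≠ 0 →
      ∃ q ∈ Submonoid.closure S, ∃ α, IsLMser o f α ∧ IsLMser o q α := by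
  rintro f ⟨Q, hQ⟩ hf
  classical
  obtain ⟨α, hLM, hmin⟩ := exists_IsLMser o hdeg f hf
  set d0 := Finsupp.degree α with hd0
  have hfin : {β : Fin s →₀ ℕ | Finsupp.degree β ≤ d0}.Finite := Finsupp.finite_of_degree_le d0
  set P : MvPolynomial (Fin s) K :=
    ∑ β ∈ hfin.toFinset, MvPolynomial.monomial β (MvPowerSeries.coeff β Q) with hP
  have hPcoeff : ∀ γ, P.coeff γ =
      if Finsupp.degree γ ≤ d0 then MvPowerSeries.coeff γ Q else 0 := by
    intro γ
    rw [hP, MvPolynomial.coeff_sum]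
    simp_rw [MvPolynomial.coeff_monomial]
    rw [Finset.sum_ite_eq' hfin.toFinset γ]
    simp [Set.Finite.mem_toFinset]
  have h1 : f - MvPolynomial.aeval (fun i => ((g i : MvPowerSeries (Fin n) K))) P
      ∈ (mIdeal n K) ^ (d0 + 1) := by
    refine hQ (d0 + 1) P (fun γ hγ => ?_) (fun γ hγ => ?_)
    · rw [hPcoeff]; rw [if_pos (by omega)]
    · rw [hPcoeff]; rw [if_neg (by omega)]
  set p : MvPolynomial (Fin n) K := MvPolynomial.aeval g P with hpdef
  have hp : (p : MvPowerSeries (Fin n) K)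
      = MvPolynomial.aeval (fun i => ((g i : MvPowerSeries (Fin n) K))) P := by
    rw [hpdef, ← coe_algHom_eq, MvPolynomial.comp_aeval_apply]
    simp_rw [coe_algHom_eq]
  have hcoeff : ∀ β : Fin n →₀ ℕ, Finsupp.degree β ≤ d0 →
      MvPowerSeries.coeff β (p : MvPowerSeries (Fin n) K) = MvPowerSeries.coeff β f := by
    intro β hβ
    have h0 := coeff_eq_zero_of_mem_mpow (d0 + 1) _ h1 β (by omega)
    rw [← hp, map_sub, sub_eq_zero] at h0
    exact h0.symm
  have hpcoe : ∀ β, MvPowerSeries.coeff β (p : MvPowerSeries (Fin n) K) = p.coeff β :=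
    fun β => MvPolynomial.coeff_coe p β
  have hpα : p.coeff α ≠ 0 := by
    rw [← hpcoe, hcoeff α le_rfl]; exact hLM.1
  have hpLM : IsLM o p α := by
    refine ⟨hpα, fun β hβ hβα => ?_⟩
    rcases le_or_gt (Finsupp.degree β) d0 with hle | hlt
    · have : MvPowerSeries.coeff β f ≠ 0 := by
        rw [← hcoeff β hle, hpcoe]; exact hβ
      exact hLM.2 β this hβα
    · exact lt_of_deg_lt o hdeg hlt
  have hpadj : p ∈ Algebra.adjoin K (Set.range g) := by
    rw [Algebra.adjoin_range_eq_range_aeval]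
    exact ⟨P, rfl⟩
  have hpne : p ≠ 0 := fun h => hpα (by rw [h, MvPolynomial.coeff_zero])
  obtain ⟨q, hq, α', hLM', hLMq⟩ := hSasbi p hpadj hpne
  have hαα : α' = α := by
    by_contra hne
    exact o.irrefl α (o.trans _ _ _ (hLM'.2 α hpLM.1 (Ne.symm hne)) (hpLM.2 α' hLM'.1 hne))
  exact ⟨q, hq, α, hLM, hαα ▸ hLMq⟩
end
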